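/- The Taylor expansion of f(u) = 3·arccos(cos u/(cos u + 1)) − π at u = 0 begins f(u) = (√3/4)·u²·(1 + u²/8 + u⁴/60 + O(u⁶)); in particular, lim_{u→0} (f(u) − (√3/4)u² − (√3/32)u⁴)/u⁶ = √3/240. -/

import Mathlib

open Real Filter Set Finset Topology

namespace Stmt11Aux
noncomputable def T (x : ℝ) : ℝ := 1 - x^2/2 + x^4/24 - x^6/720

set_option maxHeartbeats 1000000 in
lemma cos_T_bound {x : ℝ} (hx : |x| ≤ 1) : |Real.cos x - T x| ≤ |x|^8 := by
  have hax : ‖x*Complex.I‖ ≤ 1 := by simpa using hx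
  have hax' : ‖-(x*Complex.I)‖ ≤ 1 := by simpa using hx
  have h1 := Complex.exp_bound hax (by norm_num : 0 < 8)
  have h2 := Complex.exp_bound hax' (by norm_num : 0 < 8)
  have hsum : (∑ m ∈ range 8, (x*Complex.I)^m / m.factorial) + ∑ m ∈ range 8, (-(x*Complex.I))^m / m.factorial = 2 * (T x : ℂ) := by
    have i2 : Complex.I^2 = -1 := Complex.I_sq
    have i3 : Complex.I^3 = -Complex.I := by rw [pow_succ, i2]; ring
    have i4 : Complex.I^4 = 1 := by rw [pow_succ, i3]; simp [Complex.I_mul_I]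
    have i5 : Complex.I^5 = Complex.I := by rw [pow_succ, i4]; ring
    have i6 : Complex.I^6 = -1 := by rw [pow_succ, i5, Complex.I_mul_I]
    have i7 : Complex.I^7 = -Complex.I := by rw [pow_succ, i6]; ring
    simp only [Finset.sum_range_succ, Finset.range_zero, Finset.sum_empty, T]
    push_cast
    ring_nf
    rw [i2, i4, i6]
    norm_num [Nat.factorial]
    ring
  have key : (Real.cos x : ℂ) - (T x : ℂ) = (Complex.exp (x*Complex.I) - ∑ m ∈ range 8, (x*Complex.I)^m / m.factorial) / 2 + (Complex.exp (-(x*Complex.I)) - ∑ m ∈ range 8, (-(x*Complex.I))^m / m.factorial) / 2 := by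
    rw [Complex.ofReal_cos, Complex.cos, neg_mul]
    field_simp
    linear_combination hsum
  have habs : |Real.cos x - T x| = ‖(Real.cos x : ℂ) - (T x : ℂ)‖ := by
    rw [← Complex.ofReal_sub, Complex.norm_real, Real.norm_eq_abs]
  rw [habs, key]
  have e1 : ‖x*Complex.I‖ = |x| := by simp
  have e2 : ‖-(x*Complex.I)‖ = |x| := by simp
  rw [e1] at h1; rw [e2] at h2
  have hk : ((Nat.succ 8 : ℕ) : ℝ) * (((Nat.factorial 8 : ℕ) : ℝ) * ((8:ℕ):ℝ))⁻¹ ≤ 1 := by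
    norm_num [Nat.factorial]
  have hp : (0:ℝ) ≤ |x|^8 := pow_nonneg (abs_nonneg x) 8
  calc ‖_‖ ≤ ‖(Complex.exp (x*Complex.I) - ∑ m ∈ range 8, (x*Complex.I)^m / m.factorial) / 2‖ + ‖(Complex.exp (-(x*Complex.I)) - ∑ m ∈ range 8, (-(x*Complex.I))^m / m.factorial) / 2‖ := norm_add_le _ _
    _ ≤ (|x|^8 * (((Nat.succ 8 : ℕ) : ℝ) * (((Nat.factorial 8 : ℕ) : ℝ) * ((8:ℕ):ℝ))⁻¹))/2 + (|x|^8 * (((Nat.succ 8 : ℕ) : ℝ) * (((Nat.factorial 8 : ℕ) : ℝ) * ((8:ℕ):ℝ))⁻¹))/2 := by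
        rw [norm_div, norm_div]
        simp only [Complex.norm_two]
        gcongr
    _ = |x|^8 * (((Nat.succ 8 : ℕ) : ℝ) * (((Nat.factorial 8 : ℕ) : ℝ) * ((8:ℕ):ℝ))⁻¹) := by ring
    _ ≤ |x|^8 * 1 := by gcongr
    _ = |x|^8 := mul_one _

noncomputable def P (u : ℝ) : ℝ := 3*u^2/4 + 3*u^4/8 + 3*u^6/64
noncomputable def M (u : ℝ) : ℝ := 9 - 9*Real.cos u - P u * (1 + 3*Real.cos u + 2*(Real.cos u)^2)
noncomputable def G (u : ℝ) : ℝ := -121/1920 - 53/7680*u^2 + 101/46080*u^4 - 289/1382400*u^6 + 13/1382400*u^8 - 1/5529600*u^10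
noncomputable def B (u : ℝ) : ℝ := -9 - P u * (3 + 2*T u + 2*Real.cos u)

lemma ev_ball : ∀ᶠ u in 𝓝[≠] (0:ℝ), |u| < 1 ∧ u ≠ 0 := by
  have h1 : ∀ᶠ u in 𝓝 (0:ℝ), |u| < 1 := by
    have : Ioo (-1:ℝ) 1 ∈ 𝓝 (0:ℝ) := Ioo_mem_nhds (by norm_num) (by norm_num)
    filter_upwards [this] with u hu
    rw [abs_lt]; exact ⟨hu.1, hu.2⟩
  exact (eventually_nhdsWithin_of_eventually_nhds h1).and self_mem_nhdsWithin

set_option maxHeartbeats 1000000 in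
lemma tendsto_M : Tendsto (fun u => M u / u^6) (𝓝[≠] (0:ℝ)) (𝓝 (9/20)) := by
  have hev : ∀ᶠ u in 𝓝[≠] (0:ℝ), (9/20 + u^2 * G u) + ((Real.cos u - T u)/u^6) * B u = M u / u^6 := by
    filter_upwards [ev_ball] with u hu
    have hu6 : u^6 ≠ 0 := pow_ne_zero _ hu.2
    have hu0 : u ≠ 0 := hu.2
    field_simp [M, P, T, G, B]
    unfold M B G P T
    ring
  have t2 : Tendsto (fun u => (Real.cos u - T u)/u^6) (𝓝[≠] (0:ℝ)) (𝓝 0) := by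
    apply squeeze_zero_norm' (a := fun u => |u|^2)
    · filter_upwards [ev_ball] with u hu
      have h8 := cos_T_bound hu.1.le
      have hpos : (0:ℝ) < |u|^6 := pow_pos (abs_pos.mpr hu.2) 6
      rw [Real.norm_eq_abs, abs_div, abs_pow]
      rw [div_le_iff₀ hpos]
      calc |Real.cos u - T u| ≤ |u|^8 := h8
        _ = |u|^2 * |u|^6 := by ring
    · have : Tendsto (fun u : ℝ => |u|^2) (𝓝 0) (𝓝 0) := by
        have := ((continuous_abs.pow 2).tendsto (0:ℝ))
        convert this using 2 <;> simp
      exact this.mono_left nhdsWithin_le_nhds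
  have t3 : Tendsto B (𝓝[≠] (0:ℝ)) (𝓝 (B 0)) := by
    have : Continuous B := by unfold B P T; continuity
    exact (this.tendsto 0).mono_left nhdsWithin_le_nhds
  have t1 : Tendsto (fun u : ℝ => 9/20 + u^2 * G u) (𝓝[≠] (0:ℝ)) (𝓝 (9/20)) := by
    have hc : Continuous (fun u : ℝ => 9/20 + u^2 * G u) := by unfold G; continuity
    have := (hc.tendsto 0).mono_left (nhdsWithin_le_nhds (s := {(0:ℝ)}ᶜ))
    simpa [G] using this
  have := (t1.add (t2.mul t3)).congr' hev
  simpa using this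

noncomputable def hh (u : ℝ) : ℝ := 3*Real.sin u/((1+Real.cos u)*Real.sqrt (2*Real.cos u+1))
noncomputable def qq (u : ℝ) : ℝ := Real.sqrt 3/2*u + Real.sqrt 3/8*u^3

lemma cos_gt_half {u : ℝ} (hu : |u| < 1) : 1/2 < Real.cos u := by
  rcases eq_or_ne u 0 with rfl | hne
  · simp; norm_num
  · have h1 := Real.one_sub_sq_div_two_lt_cos (x := u) hne
    have h2 : u^2 < 1 := by
      have := abs_lt.mp hu
      nlinarith
    linarith

lemma s_sq {u : ℝ} (hu : |u| < 1) :
    Real.sqrt (2*Real.cos u+1) ^ 2 = 2*Real.cos u+1 := by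
  have := cos_gt_half hu
  exact Real.sq_sqrt (by linarith)

lemma s_pos {u : ℝ} (hu : |u| < 1) : 0 < Real.sqrt (2*Real.cos u+1) := by
  have := cos_gt_half hu
  exact Real.sqrt_pos.mpr (by linarith)

lemma sin_mul_pos {u : ℝ} (hu : |u| < 1) (hne : u ≠ 0) : 0 < Real.sin u * u := by
  have h := abs_lt.mp hu
  rcases lt_or_gt_of_ne hne with hneg | hpos
  · have : Real.sin u < 0 := Real.sin_neg_of_neg_of_neg_pi_lt hneg (by nlinarith [Real.pi_gt_three])
    exact mul_pos_of_neg_of_neg this hneg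
  · have : 0 < Real.sin u := Real.sin_pos_of_pos_of_lt_pi hpos (by nlinarith [Real.pi_gt_three])
    exact mul_pos this hpos

lemma hq_mul_pos {u : ℝ} (hu : |u| < 1) (hne : u ≠ 0) : 0 < (hh u + qq u) * u := by
  have hc := cos_gt_half hu
  have hs := s_pos hu
  have h1 : 0 < hh u * u := by
    unfold hh
    have := sin_mul_pos hu hne
    rw [div_mul_eq_mul_div]
    apply div_pos (by nlinarith) (by nlinarith)
  have h2 : 0 < qq u * u := by
    unfold qq
    have h3 : 0 < Real.sqrt 3 := Real.sqrt_pos.mpr (by norm_num)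
    have hu2 : 0 < u^2 := by positivity
    have hu4 : 0 < u^2*u^2 := mul_pos hu2 hu2
    nlinarith
  nlinarith

lemma tendsto_sin_div : Tendsto (fun u : ℝ => Real.sin u / u) (𝓝[≠] (0:ℝ)) (𝓝 1) := by
  have h := (Real.hasDerivAt_sin 0)
  rw [hasDerivAt_iff_tendsto_slope] at h
  simp only [Real.cos_zero] at h
  refine h.congr ?_
  intro u
  simp [slope_def_field]

lemma sqrt3_sq : Real.sqrt 3 * Real.sqrt 3 = 3 := Real.mul_self_sqrt (by norm_num)
lemma sqrt3_sq' : Real.sqrt 3 ^ 2 = 3 := Real.sq_sqrt (by norm_num)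
lemma sqrt3_pos : 0 < Real.sqrt 3 := Real.sqrt_pos.mpr (by norm_num)

lemma tendsto_hq_div : Tendsto (fun u => (hh u + qq u)/u) (𝓝[≠] (0:ℝ)) (𝓝 (Real.sqrt 3)) := by
  have t1 : Tendsto (fun u : ℝ => 3/((1+Real.cos u)*Real.sqrt (2*Real.cos u+1)))
      (𝓝[≠] (0:ℝ)) (𝓝 (3/(2*Real.sqrt 3))) := by
    have hca : ContinuousAt (fun u : ℝ => 3/((1+Real.cos u)*Real.sqrt (2*Real.cos u+1))) 0 := by
      apply ContinuousAt.div continuousAt_const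
      · exact (continuousAt_const.add Real.continuous_cos.continuousAt).mul
          ((Real.continuous_sqrt.continuousAt).comp
            ((continuousAt_const.mul Real.continuous_cos.continuousAt).add continuousAt_const))
      · simp
        positivity
    have := hca.tendsto.mono_left (nhdsWithin_le_nhds (s := {(0:ℝ)}ᶜ))
    have e : 3/((1+Real.cos 0)*Real.sqrt (2*Real.cos 0+1)) = 3/(2*Real.sqrt 3) := by norm_num
    rwa [e] at this
  have t2 : Tendsto (fun u : ℝ => Real.sqrt 3 * (1/2 + u^2/8)) (𝓝[≠] (0:ℝ))
      (𝓝 (Real.sqrt 3 / 2)) := by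
    have hc : Continuous (fun u : ℝ => Real.sqrt 3 * (1/2 + u^2/8)) := by continuity
    have := (hc.tendsto 0).mono_left (nhdsWithin_le_nhds (s := {(0:ℝ)}ᶜ))
    simpa [div_eq_mul_inv] using this.congr (fun u => by ring)
  have tt := (tendsto_sin_div.mul t1).add t2
  have hval : 1 * (3/(2*Real.sqrt 3)) + Real.sqrt 3 / 2 = Real.sqrt 3 := by
    have h3 := sqrt3_sq
    have h0 : Real.sqrt 3 ≠ 0 := ne_of_gt sqrt3_pos
    field_simp
    linear_combination -sqrt3_sq'
  rw [hval] at tt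
  refine tt.congr' ?_
  filter_upwards [ev_ball] with u hu
  have hune : u ≠ 0 := hu.2
  have hc := cos_gt_half hu.1
  have hs := s_pos hu.1
  have h1 : (1:ℝ)+Real.cos u ≠ 0 := by linarith
  have h2 : Real.sqrt (2*Real.cos u+1) ≠ 0 := ne_of_gt hs
  unfold hh qq
  field_simp

lemma tendsto_N : Tendsto (fun u => (hh u - qq u)/u^5) (𝓝[≠] (0:ℝ)) (𝓝 (Real.sqrt 3/40)) := by
  have t6 : Tendsto (fun u : ℝ => 1/((1+Real.cos u)*(1+2*Real.cos u))) (𝓝[≠] (0:ℝ))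
      (𝓝 (1/6)) := by
    have hca : ContinuousAt (fun u : ℝ => 1/((1+Real.cos u)*(1+2*Real.cos u))) 0 := by
      apply ContinuousAt.div continuousAt_const
      · fun_prop
      · simp; norm_num
    have := hca.tendsto.mono_left (nhdsWithin_le_nhds (s := {(0:ℝ)}ᶜ))
    have e : 1/((1+Real.cos 0)*(1+2*Real.cos 0)) = (1:ℝ)/6 := by norm_num
    rwa [e] at this
  have t4 : Tendsto (fun u => u/(hh u + qq u)) (𝓝[≠] (0:ℝ)) (𝓝 ((Real.sqrt 3)⁻¹)) := by
    have := tendsto_hq_div.inv₀ (ne_of_gt sqrt3_pos)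
    refine this.congr ?_
    intro u
    rw [inv_div]
  have tt := (tendsto_M.mul t6).mul t4
  have hval : 9/20 * (1/6) * (Real.sqrt 3)⁻¹ = Real.sqrt 3/40 := by
    have h3 := sqrt3_sq
    have h0 : Real.sqrt 3 ≠ 0 := ne_of_gt sqrt3_pos
    field_simp
    linear_combination -120*sqrt3_sq'
  rw [hval] at tt
  refine tt.congr' ?_
  filter_upwards [ev_ball] with u hu
  have hune : u ≠ 0 := hu.2
  have hc := cos_gt_half hu.1
  have hs := s_pos hu.1
  have hs2 := s_sq hu.1
  have hsin2 : Real.sin u ^ 2 = 1 - Real.cos u ^ 2 := by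
    have := Real.sin_sq_add_cos_sq u
    linarith
  have hqne : hh u + qq u ≠ 0 := by
    have := hq_mul_pos hu.1 hune
    intro h0
    rw [h0, zero_mul] at this
    exact lt_irrefl 0 this
  set c := Real.cos u with hcdef
  set s := Real.sqrt (2*c+1) with hsdef
  have h1c : (1:ℝ)+c ≠ 0 := by linarith
  have h12c : (1:ℝ)+2*c ≠ 0 := by linarith
  have hsne : s ≠ 0 := ne_of_gt hs
  have e1 : (hh u)^2 = 9*(1-c)/((1+c)*(1+2*c)) := by
    unfold hh
    rw [← hcdef, ← hsdef, div_pow]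
    field_simp
    linear_combination (9*(1+2*c))*hsin2 - (9*(1-c)*(1+c))*hs2
  have e2 : (qq u)^2 = 3*u^2/4 + 3*u^4/8 + 3*u^6/64 := by
    unfold qq
    linear_combination (u^2/4+u^4/8+u^6/64)*sqrt3_sq'
  have key1 : hh u - qq u = (M u / ((1+c)*(1+2*c))) / (hh u + qq u) := by
    rw [eq_div_iff hqne]
    have expand : (hh u - qq u)*(hh u + qq u) = (hh u)^2 - (qq u)^2 := by ring
    rw [expand, e1, e2]
    unfold M P
    rw [← hcdef]
    field_simp
    ring
  rw [key1]
  field_simp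

lemma arccos_half : Real.arccos (1/2) = Real.pi/3 := by
  rw [← Real.cos_pi_div_three]
  exact Real.arccos_cos (by positivity) (by linarith [Real.pi_pos])

set_option maxHeartbeats 1000000 in
lemma hasDerivAt_F {u : ℝ} (hu : |u| < 1) :
    HasDerivAt (fun u : ℝ => (3*Real.arccos (Real.cos u/(Real.cos u+1)) - Real.pi)
      - Real.sqrt 3/4*u^2 - Real.sqrt 3/32*u^4) (hh u - qq u) u := by
  have hc := cos_gt_half hu
  have hs := s_pos hu
  have hs2 := s_sq hu
  set c := Real.cos u with hcdef
  set s := Real.sqrt (2*c+1) with hsdef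
  have hc1 : c + 1 ≠ 0 := by linarith
  have hd1 : HasDerivAt (fun y : ℝ => Real.cos y/(Real.cos y+1)) (-Real.sin u/(c+1)^2) u := by
    have hd := (Real.hasDerivAt_cos u).div ((Real.hasDerivAt_cos u).add_const 1) hc1
    refine hd.congr_deriv (Eq.symm ?_)
    rw [← hcdef]
    field_simp
    ring
  have hxpos : 0 < c/(c+1) := div_pos (by linarith) (by linarith)
  have hxm1 : c/(c+1) ≠ -1 := by linarith [hxpos]
  have hx1 : c/(c+1) ≠ 1 := ne_of_lt ((div_lt_one (by linarith)).mpr (by linarith))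
  have hd2 := (Real.hasDerivAt_arccos hxm1 hx1).comp u hd1
  have hd3 := ((hd2.const_mul 3).sub_const Real.pi).sub
    ((hasDerivAt_pow 2 u).const_mul (Real.sqrt 3/4)) |>.sub
    ((hasDerivAt_pow 4 u).const_mul (Real.sqrt 3/32))
  have hx2 : 1 - (c/(c+1))^2 = (2*c+1)/(c+1)^2 := by field_simp; ring
  have hsqrt : Real.sqrt (1 - (c/(c+1))^2) = s/(c+1) := by
    rw [hx2, Real.sqrt_div (by linarith), hsdef, Real.sqrt_sq (by linarith)]
  have E : 3 * (-(1 / Real.sqrt (1 - (c/(c+1))^2)) * (-Real.sin u / (c+1)^2))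
      - Real.sqrt 3/4*((2:ℕ) * u^(2-1)) - Real.sqrt 3/32*((4:ℕ)*u^(4-1)) = hh u - qq u := by
    rw [hsqrt]
    unfold hh qq
    rw [← hcdef, ← hsdef]
    have hsne : s ≠ 0 := ne_of_gt hs
    push_cast
    field_simp
    ring
  exact E ▸ hd3

end Stmt11Aux

open Stmt11Aux in
theorem stmt_11 :
    Filter.Tendsto (fun u : ℝ =>
      ((3 * Real.arccos (Real.cos u / (Real.cos u + 1)) - Real.pi)
        - Real.sqrt 3 / 4 * u ^ 2 - Real.sqrt 3 / 32 * u ^ 4) / u ^ 6)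
      (nhdsWithin 0 {0}ᶜ) (nhds (Real.sqrt 3 / 240)) := by
  apply HasDerivAt.lhopital_zero_nhdsNE (f' := fun u => hh u - qq u) (g' := fun u : ℝ => 6*u^5)
  · filter_upwards [ev_ball] with u hu
    have := hasDerivAt_F hu.1
    convert this using 2 <;> ring
  · filter_upwards [] with u
    simpa using hasDerivAt_pow 6 u
  · filter_upwards [ev_ball] with u hu
    have : u^5 ≠ 0 := pow_ne_zero _ hu.2
    positivity
  · have hca : ContinuousAt (fun u : ℝ =>
        (3 * Real.arccos (Real.cos u / (Real.cos u + 1)) - Real.pi)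
        - Real.sqrt 3 / 4 * u ^ 2 - Real.sqrt 3 / 32 * u ^ 4) 0 := by
      have h1 : ContinuousAt (fun u : ℝ => Real.cos u / (Real.cos u + 1)) 0 := by
        apply ContinuousAt.div
        · fun_prop
        · fun_prop
        · norm_num
      have h2 : ContinuousAt (fun u : ℝ => Real.arccos (Real.cos u / (Real.cos u + 1))) 0 :=
        Real.continuous_arccos.continuousAt.comp h1
      fun_prop
    have := hca.tendsto.mono_left (nhdsWithin_le_nhds (s := {(0:ℝ)}ᶜ))
    have e : (3 * Real.arccos (Real.cos 0 / (Real.cos 0 + 1)) - Real.pi)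
        - Real.sqrt 3 / 4 * (0:ℝ) ^ 2 - Real.sqrt 3 / 32 * (0:ℝ) ^ 4 = 0 := by
      norm_num
      rw [arccos_half]
      ring
    rwa [e] at this
  · have := ((continuous_pow 6).tendsto (0:ℝ)).mono_left (nhdsWithin_le_nhds (s := {(0:ℝ)}ᶜ))
    simpa using this
  · have := tendsto_N.div_const 6
    have e : Real.sqrt 3 / 40 / 6 = Real.sqrt 3 / 240 := by ring
    rw [e] at this
    refine this.congr (fun u => ?_)
    ring
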